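/- Suppose nonnegative integers t_{i,j} (finitely supported, i+j ≥ 2) satisfy Σ ij·t_{i,j} = n(n−k), Σ (C(i,2)+C(j,2))·t_{i,j} = C(n,2)+C(n−k,2), and Melchior's inequality Σ(3−(i+j))t_{i,j} ≥ 3. Then the number of 1-equichromatic lines through at most six points, counted with appropriate weight, satisfies: Σ over (i,j) with |i−j| ≤ 1, i,j ≥ 1, i+j ≤ 6 of t_{i,j} is at least (t + 6n + 15 − 3k(k+1))/12, where t = Σ t_{i,j}. -/
import Mathlib

open Finset

private def Eset : Finset (ℕ × ℕ) :=
  {(1, 1), (1, 2), (2, 1), (2, 2), (2, 3), (3, 2), (3, 3)}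

private lemma key (i j : ℕ) (h2 : 2 ≤ i + j) :
    (16 : ℚ) - 3 * ((i : ℚ) - j) ^ 2 - 2 * ((i : ℚ) + j)
      ≤ 12 * (if (i, j) ∈ Eset then 1 else 0) := by
  have h2' : (2 : ℚ) ≤ (i : ℚ) + j := by exact_mod_cast h2
  by_cases hd : i + 2 ≤ j ∨ j + 2 ≤ i
  · have hsq : (4 : ℚ) ≤ ((i : ℚ) - j) ^ 2 := by
      rcases hd with h | h
      · have : (i : ℚ) + 2 ≤ j := by exact_mod_cast h
        nlinarith
      · have : (j : ℚ) + 2 ≤ i := by exact_mod_cast h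
        nlinarith
    split <;> nlinarith
  · push_neg at hd
    by_cases hm : i + j ≤ 6
    · have hE : (i, j) ∈ Eset := by
        simp only [Eset, Finset.mem_insert, Finset.mem_singleton, Prod.mk.injEq]
        omega
      rw [if_pos hE]
      nlinarith [sq_nonneg ((i : ℚ) - j)]
    · push_neg at hm
      have hge : (0 : ℚ) ≤ 12 * (if (i, j) ∈ Eset then (1 : ℚ) else 0) := by
        split <;> norm_num
      by_cases hij : i = j
      · subst hij
        have h8n : (8 : ℕ) ≤ i + i := by omega
        have h8 : (8 : ℚ) ≤ (i : ℚ) + i := by exact_mod_cast h8n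
        nlinarith
      · have hsq : (1 : ℚ) ≤ ((i : ℚ) - j) ^ 2 := by
          have h1 : i + 1 ≤ j ∨ j + 1 ≤ i := by omega
          rcases h1 with h | h
          · have : (i : ℚ) + 1 ≤ j := by exact_mod_cast h
            nlinarith
          · have : (j : ℚ) + 1 ≤ i := by exact_mod_cast h
            nlinarith
        have h7 : (7 : ℚ) ≤ (i : ℚ) + j := by exact_mod_cast hm
        nlinarith

/-- Abstract version of Purdy–Smith Theorem 4: from the two pair-counting identities
and Melchior's inequality, the number of 1-equichromatic lines through at most six
points is at least `(t + 6n + 15 - 3k(k+1))/12`, where `t` is the total number of lines. -/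
theorem stmt_15 (n k : ℕ) (hk : k ≤ n) (t : (ℕ × ℕ) →₀ ℕ)
    (hsupp : ∀ p ∈ t.support, 2 ≤ p.1 + p.2)
    (ha : t.sum (fun p v => (p.1 : ℤ) * (p.2 : ℤ) * v) = (n : ℤ) * ((n : ℤ) - k))
    (hb : t.sum (fun p v => ((p.1.choose 2 : ℤ) + (p.2.choose 2 : ℤ)) * v)
        = (n.choose 2 : ℤ) + ((n - k).choose 2 : ℤ))
    (hmel : t.sum (fun p v => (3 - ((p.1 : ℤ) + p.2)) * v) ≥ 3) :
    ((t (1, 1) + t (1, 2) + t (2, 1) + t (2, 2) + t (2, 3) + t (3, 2) + t (3, 3) : ℕ) : ℚ)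
      ≥ ((t.sum fun _ v => (v : ℚ)) + 6 * (n : ℚ) + 15 - 3 * (k : ℚ) * (k + 1)) / 12 := by
  rw [ge_iff_le, div_le_iff₀ (by norm_num : (0 : ℚ) < 12)]
  set s := t.support with hs
  have haQ : ∑ p ∈ s, (p.1 : ℚ) * p.2 * t p = (n : ℚ) * ((n : ℚ) - k) := by
    have h := congrArg (fun z : ℤ => (z : ℚ)) ha
    rw [Finsupp.sum] at h
    push_cast at h
    exact h
  have hbQ : ∑ p ∈ s, ((p.1.choose 2 : ℚ) + (p.2.choose 2 : ℚ)) * t p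
      = (n.choose 2 : ℚ) + ((n - k).choose 2 : ℚ) := by
    have h := congrArg (fun z : ℤ => (z : ℚ)) hb
    rw [Finsupp.sum] at h
    push_cast at h
    exact_mod_cast h
  have hmQ : (3 : ℚ) ≤ ∑ p ∈ s, (3 - ((p.1 : ℚ) + p.2)) * t p := by
    have h : (3 : ℤ) ≤ t.sum (fun p v => (3 - ((p.1 : ℤ) + p.2)) * v) := hmel
    rw [Finsupp.sum] at h
    have h2 := (@Int.cast_le ℚ _ _ _).mpr h
    push_cast at h2
    exact h2
  have hI : ∑ p ∈ s, (((p.1 : ℚ) - p.2) ^ 2 - ((p.1 : ℚ) + p.2)) * t p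
      = (k : ℚ) ^ 2 + k - 2 * n := by
    have e : ∀ p ∈ s, (((p.1 : ℚ) - p.2) ^ 2 - ((p.1 : ℚ) + p.2)) * t p
        = 2 * (((p.1.choose 2 : ℚ) + (p.2.choose 2 : ℚ)) * t p)
          - 2 * ((p.1 : ℚ) * p.2 * t p) := by
      intro p _
      rw [Nat.cast_choose_two, Nat.cast_choose_two]
      ring
    rw [Finset.sum_congr rfl e, Finset.sum_sub_distrib, ← Finset.mul_sum, ← Finset.mul_sum,
      haQ, hbQ, Nat.cast_choose_two, Nat.cast_choose_two, Nat.cast_sub hk]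
    ring
  have hT : (t.sum fun _ v => (v : ℚ)) = ∑ p ∈ s, (t p : ℚ) := by rw [Finsupp.sum]
  have step1 : (t.sum fun _ v => (v : ℚ)) + 6 * n + 15 - 3 * (k : ℚ) * (k + 1)
      ≤ ∑ p ∈ s, (16 - 3 * ((p.1 : ℚ) - p.2) ^ 2 - 2 * ((p.1 : ℚ) + p.2)) * t p := by
    have expand : ∑ p ∈ s, (16 - 3 * ((p.1 : ℚ) - p.2) ^ 2 - 2 * ((p.1 : ℚ) + p.2)) * t p
        = ∑ p ∈ s, (t p : ℚ)
          - 3 * ∑ p ∈ s, (((p.1 : ℚ) - p.2) ^ 2 - ((p.1 : ℚ) + p.2)) * t p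
          + 5 * ∑ p ∈ s, (3 - ((p.1 : ℚ) + p.2)) * t p := by
      rw [Finset.mul_sum, Finset.mul_sum, ← Finset.sum_sub_distrib, ← Finset.sum_add_distrib]
      exact Finset.sum_congr rfl fun p _ => by ring
    rw [hT, expand, hI]
    linarith
  have step2 : ∑ p ∈ s, (16 - 3 * ((p.1 : ℚ) - p.2) ^ 2 - 2 * ((p.1 : ℚ) + p.2)) * t p
      ≤ ∑ p ∈ s, (if p ∈ Eset then 12 * (t p : ℚ) else 0) := by
    apply Finset.sum_le_sum
    intro p hp
    have hkey := key p.1 p.2 (hsupp p hp)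
    have ht : (0 : ℚ) ≤ t p := by positivity
    calc (16 - 3 * ((p.1 : ℚ) - p.2) ^ 2 - 2 * ((p.1 : ℚ) + p.2)) * t p
        ≤ (12 * (if (p.1, p.2) ∈ Eset then 1 else 0)) * t p :=
          mul_le_mul_of_nonneg_right hkey ht
      _ = if p ∈ Eset then 12 * (t p : ℚ) else 0 := by
          rw [Prod.mk.eta]
          split <;> ring
  have step3 : ∑ p ∈ s, (if p ∈ Eset then 12 * (t p : ℚ) else 0)
      ≤ 12 * ∑ p ∈ Eset, (t p : ℚ) := by
    rw [← Finset.sum_filter, ← Finset.mul_sum]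
    apply mul_le_mul_of_nonneg_left _ (by norm_num)
    exact Finset.sum_le_sum_of_subset_of_nonneg
      (fun x hx => (Finset.mem_filter.mp hx).2) (fun _ _ _ => by positivity)
  have step4 : ∑ p ∈ Eset, (t p : ℚ)
      = (t (1, 1) : ℚ) + t (1, 2) + t (2, 1) + t (2, 2) + t (2, 3) + t (3, 2) + t (3, 3) := by
    norm_num [Eset, Finset.sum_insert, Finset.mem_insert, Prod.ext_iff]
    ring
  push_cast
  rw [step4] at step3
  linarith
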